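/- arXiv:1103.4262 — 2 statements merged into one kernel-verified Lean document; each statement's English description precedes it below -/
import Mathlib

section
/- Let F, G : 𝒞 → 𝒟 be functors with 𝒞 having a terminal object, and let γ : F ⟹ G be a cartesian natural transformation (all naturality squares are pullbacks). If G is a parametric right adjoint, then F is a parametric right adjoint. -/
open CategoryTheory CategoryTheory.Limits

/-- The canonical factorization `F₁ : 𝒞 ⥤ 𝒟/F(1)` of a functor `F : 𝒞 ⥤ 𝒟` out of a
category with a terminal object, sending `c` to `F(!_c)`. -/
noncomputable def praFactor {C : Type*} [Category C] {D : Type*} [Category D] [HasTerminal C]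
    (F : C ⥤ D) : C ⥤ Over (F.obj (⊤_ C)) where
  obj c := Over.mk (F.map (terminal.from c))
  map {c c'} f := Over.homMk (F.map f) (by dsimp; rw [← F.map_comp, terminal.comp_from])

/-- A functor out of a category with a terminal object is a parametric right adjoint
if its canonical factorization through the slice over the image of the terminal object
has a left adjoint. -/
def IsPRA {C : Type*} [Category C] {D : Type*} [Category D] [HasTerminal C]
    (F : C ⥤ D) : Prop :=
  (praFactor F).IsRightAdjoint

/-- If `γ : F ⟹ G` is a cartesian natural transformation (all naturality squares are
pullbacks) and `G` is a parametric right adjoint, then so is `F`. -/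
theorem isPRA_of_cartesian_natTrans {C : Type*} [Category C] {D : Type*} [Category D]
    [HasTerminal C] (F G : C ⥤ D) (γ : F ⟶ G)
    (hcart : ∀ {X Y : C} (f : X ⟶ Y),
      IsPullback (F.map f) (γ.app X) (γ.app Y) (G.map f))
    (hG : IsPRA G) : IsPRA F := by
  obtain ⟨L, ⟨adj⟩⟩ := hG
  have comm : ∀ (c : C), F.map (terminal.from c) ≫ γ.app (⊤_ C) =
      γ.app c ≫ G.map (terminal.from c) := fun c => (hcart (terminal.from c)).w
  -- key equivalence: maps `X ⟶ F₁ c` correspond to maps `(Over.map γ₁).obj X ⟶ G₁ c`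
  let e : ∀ (X : Over (F.obj (⊤_ C))) (c : C),
      (X ⟶ (praFactor F).obj c) ≃
        ((Over.map (γ.app (⊤_ C))).obj X ⟶ (praFactor G).obj c) := fun X c =>
    { toFun := fun u => Over.homMk (u.left ≫ γ.app c) (by
        have hu : u.left ≫ F.map (terminal.from c) = X.hom := Over.w u
        dsimp [praFactor]
        rw [Category.assoc, ← comm c, ← Category.assoc]
        exact congrArg (· ≫ γ.app (⊤_ C)) hu)
      invFun := fun v => Over.homMk
        ((hcart (terminal.from c)).lift X.hom v.left (by
          have hv := Over.w v
          dsimp [praFactor] at hv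
          exact hv.symm))
        (by dsimp [praFactor]; rw [(hcart (terminal.from c)).lift_fst])
      left_inv := fun u => by
        ext
        apply (hcart (terminal.from c)).hom_ext
        · dsimp [praFactor]
          exact ((hcart (terminal.from c)).lift_fst _ _ _).trans (Over.w u).symm
        · dsimp
          exact (hcart (terminal.from c)).lift_snd _ _ _
      right_inv := fun v => by
        ext
        dsimp
        exact (hcart (terminal.from c)).lift_snd _ _ _ }
  constructor
  exact ⟨Over.map (γ.app (⊤_ C)) ⋙ L, ⟨Adjunction.mkOfHomEquiv
    { homEquiv := fun X c => (adj.homEquiv _ c).trans (e X c).symm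
      homEquiv_naturality_left_symm := fun {X' X c} f g => by
        dsimp
        rw [← adj.homEquiv_naturality_left_symm]
        congr 1
        ext
        simp [e]
        exact Category.assoc _ _ _
      homEquiv_naturality_right := fun {X c c'} f g => by
        dsimp
        rw [adj.homEquiv_naturality_right]
        rw [Equiv.symm_apply_eq]
        ext
        have hu := congrArg CommaMorphism.left
          ((e X c).apply_symm_apply (adj.homEquiv ((Over.map (γ.app (⊤_ C))).obj X) c f))
        dsimp [e] at hu ⊢
        dsimp [praFactor]
        simp only [Over.homMk_left] at hu ⊢
        rw [Category.assoc, γ.naturality, ← Category.assoc]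
        exact congrArg (· ≫ G.map g) hu.symm }⟩⟩
end

section
/- If i : Θ₀ → 𝒜 is a dense fully faithful functor into a category 𝒜 with coproducts, and S is a set, then the induced functor i_S : S × Θ₀ → 𝒜/(∐_{s∈S} 1), sending (s, θ) to the composite i(θ) → 1 → ∐_S 1 via the s-th coproduct injection, is dense and fully faithful (assuming 𝒜 has a terminal object 1 and the coproduct injections are monic and the colorings separate: every map i(θ) → ∐_S 1 with θ connected factors through exactly one injection). In particular, density of arities is preserved under coloring. -/
open CategoryTheory CategoryTheory.Limits

universe v u₁ u₂ w

/-- The nerve functor induced by `i : C ⥤ D`, `d ↦ hom_D(i(-), d)`. -/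
noncomputable def nerveOf {C : Type u₁} [Category.{v} C] {D : Type u₂} [Category.{v} D]
    (i : C ⥤ D) : D ⥤ Cᵒᵖ ⥤ Type v :=
  yoneda ⋙ (Functor.whiskeringLeft _ _ (Type v)).obj (Functor.op i)

/-- `i` is dense when the induced nerve `d ↦ hom(i(-), d)` is fully faithful. -/
def IsDenseF {C : Type u₁} [Category.{v} C] {D : Type u₂} [Category.{v} D]
    (i : C ⥤ D) : Prop :=
  (nerveOf i).Full ∧ (nerveOf i).Faithful

/-- The `S`-colored inclusion: the disjoint union of `S` copies of `C` is included in
the slice of `D` over the coproduct of `S` copies of the terminal object, the copy of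
index `s` being included via the `s`-th coproduct injection (the `s`-th color). -/
noncomputable def coloredInclusion {C : Type u₁} [Category.{v} C] {D : Type u₂}
    [Category.{v} D] (i : C ⥤ D) (S : Type w) [HasTerminal D]
    [HasCoproduct (fun _ : S => ⊤_ D)] :
    Discrete S × C ⥤ Over (∐ fun _ : S => ⊤_ D) where
  obj p := Over.mk (terminal.from (i.obj p.2) ≫ Sigma.ι (fun _ : S => ⊤_ D) p.1.as)
  map {p q} f := Over.homMk (i.map f.2) (by
    have h : p.1.as = q.1.as := Discrete.eq_of_hom f.1
    dsimp
    rw [h, ← Category.assoc, terminal.comp_from])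

section Aux
variable {Θ₀ : Type u₁} [Category.{v} Θ₀]
    {A : Type u₂} [Category.{v} A] (i : Θ₀ ⥤ A)
    (S : Type v) [HasTerminal A] [HasCoproduct (fun _ : S => ⊤_ A)]

/-- Package a map `g : i(θ) ⟶ X.left` of color `s` as an `Over` morphism. -/
noncomputable def auxToOver {X : Over (∐ fun _ : S => ⊤_ A)} {θ : Θ₀}
    (g : i.obj θ ⟶ X.left) (s : S)
    (h : g ≫ X.hom = terminal.from (i.obj θ) ≫ Sigma.ι (fun _ : S => ⊤_ A) s) :
    (coloredInclusion i S).obj (⟨s⟩, θ) ⟶ X :=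
  Over.homMk g (by simpa [coloredInclusion] using h)

@[simp] lemma auxToOver_left {X : Over (∐ fun _ : S => ⊤_ A)} {θ : Θ₀}
    (g : i.obj θ ⟶ X.left) (s : S)
    (h : g ≫ X.hom = terminal.from (i.obj θ) ≫ Sigma.ι (fun _ : S => ⊤_ A) s) :
    (auxToOver i S g s h).left = g := rfl

variable (hsep : ∀ (θ : Θ₀) (f : i.obj θ ⟶ ∐ fun _ : S => ⊤_ A),
      ∃! s : S, f = terminal.from (i.obj θ) ≫ Sigma.ι (fun _ : S => ⊤_ A) s)

/-- The color of a map `g : i(θ) ⟶ X.left`. -/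
noncomputable def auxColor {X : Over (∐ fun _ : S => ⊤_ A)} {θ : Θ₀}
    (g : i.obj θ ⟶ X.left) : S :=
  (hsep θ (g ≫ X.hom)).exists.choose

lemma auxColor_spec {X : Over (∐ fun _ : S => ⊤_ A)} {θ : Θ₀}
    (g : i.obj θ ⟶ X.left) :
    g ≫ X.hom = terminal.from (i.obj θ) ≫
      Sigma.ι (fun _ : S => ⊤_ A) (auxColor i S hsep g) :=
  (hsep θ (g ≫ X.hom)).exists.choose_spec

lemma auxColor_unique {X : Over (∐ fun _ : S => ⊤_ A)} {θ : Θ₀}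
    (g : i.obj θ ⟶ X.left) (s : S)
    (h : g ≫ X.hom = terminal.from (i.obj θ) ≫ Sigma.ι (fun _ : S => ⊤_ A) s) :
    auxColor i S hsep g = s := by
  obtain ⟨u, -, hu⟩ := hsep θ (g ≫ X.hom)
  rw [hu _ (auxColor_spec i S hsep g), hu s h]

variable {X Y : Over (∐ fun _ : S => ⊤_ A)}
    (φ : (nerveOf (coloredInclusion i S)).obj X ⟶ (nerveOf (coloredInclusion i S)).obj Y)

/-- The underlying component of the value of `φ` on a colored map. -/
noncomputable def auxBarFun {θ : Θ₀} (g : i.obj θ ⟶ X.left) : i.obj θ ⟶ Y.left :=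
  (φ.app (Opposite.op (⟨auxColor i S hsep g⟩, θ))
    (auxToOver i S g _ (auxColor_spec i S hsep g))).left

lemma auxBarFun_eq {θ : Θ₀} (g : i.obj θ ⟶ X.left) (s : S)
    (h : g ≫ X.hom = terminal.from (i.obj θ) ≫ Sigma.ι (fun _ : S => ⊤_ A) s) :
    auxBarFun i S hsep φ g = (φ.app (Opposite.op (⟨s⟩, θ)) (auxToOver i S g s h)).left := by
  have hc := auxColor_unique i S hsep g s h
  subst hc
  rfl

lemma auxBarFun_w {θ : Θ₀} (g : i.obj θ ⟶ X.left) :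
    auxBarFun i S hsep φ g ≫ Y.hom = g ≫ X.hom := by
  rw [auxColor_spec i S hsep g]
  exact Over.w (φ.app (Opposite.op (⟨auxColor i S hsep g⟩, θ))
    (auxToOver i S g _ (auxColor_spec i S hsep g)))

/-- The transformation between uncolored nerves induced by `φ`. -/
noncomputable def auxBar : (nerveOf i).obj X.left ⟶ (nerveOf i).obj Y.left where
  app θ := TypeCat.ofHom (fun g => auxBarFun i S hsep φ g)
  naturality := by
    rintro ⟨θ⟩ ⟨θ'⟩ ⟨u⟩
    ext (g : i.obj θ ⟶ X.left)
    show auxBarFun i S hsep φ (i.map u ≫ g) = i.map u ≫ auxBarFun i S hsep φ g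
    set c := auxColor i S hsep g with hc
    have hspec := auxColor_spec i S hsep g
    have h' : (i.map u ≫ g) ≫ X.hom
        = terminal.from (i.obj θ') ≫ Sigma.ι (fun _ : S => ⊤_ A) c := by
      rw [Category.assoc, hspec, ← Category.assoc,
        terminal.hom_ext (i.map u ≫ terminal.from (i.obj θ)) (terminal.from (i.obj θ'))]
    rw [auxBarFun_eq i S hsep φ (i.map u ≫ g) c h']
    have hmor : auxToOver i S (i.map u ≫ g) c h'
        = (coloredInclusion i S).map ((𝟙 (⟨c⟩ : Discrete S), u) :
            ((⟨c⟩, θ') : Discrete S × Θ₀) ⟶ (⟨c⟩, θ)) ≫ auxToOver i S g c hspec := by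
      ext
      simp [coloredInclusion]
      rfl
    rw [hmor]
    have hnat := types_congr_hom (φ.naturality
      (Quiver.Hom.op ((𝟙 (⟨c⟩ : Discrete S), u) : ((⟨c⟩, θ') : Discrete S × Θ₀) ⟶ (⟨c⟩, θ))))
      (auxToOver i S g c hspec)
    have : φ.app (Opposite.op (⟨c⟩, θ'))
        ((coloredInclusion i S).map ((𝟙 (⟨c⟩ : Discrete S), u) :
          ((⟨c⟩, θ') : Discrete S × Θ₀) ⟶ (⟨c⟩, θ)) ≫ auxToOver i S g c hspec)
        = (coloredInclusion i S).map ((𝟙 (⟨c⟩ : Discrete S), u) :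
          ((⟨c⟩, θ') : Discrete S × Θ₀) ⟶ (⟨c⟩, θ)) ≫
            φ.app (Opposite.op (⟨c⟩, θ)) (auxToOver i S g c hspec) := hnat
    rw [this]
    simp [coloredInclusion, auxBarFun, ← hc]
    rfl

end Aux

/-- Density of arities is preserved under coloring: if `i : Θ₀ ⥤ 𝒜` is dense and fully
faithful, the coproduct injections are monic and the colorings separate (every map
`i(θ) ⟶ ∐_S 1` factors through exactly one injection), then the induced functor
`S × Θ₀ ⥤ 𝒜/(∐_S 1)` is fully faithful and dense. -/
theorem colored_inclusion_dense {Θ₀ : Type u₁} [Category.{v} Θ₀]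
    {A : Type u₂} [Category.{v} A] (i : Θ₀ ⥤ A) [i.Full] [i.Faithful]
    (hd : IsDenseF i) (S : Type v) [HasTerminal A]
    [HasCoproduct (fun _ : S => ⊤_ A)]
    (hmono : ∀ s : S, Mono (Sigma.ι (fun _ : S => ⊤_ A) s))
    (hsep : ∀ (θ : Θ₀) (f : i.obj θ ⟶ ∐ fun _ : S => ⊤_ A),
      ∃! s : S, f = terminal.from (i.obj θ) ≫ Sigma.ι (fun _ : S => ⊤_ A) s) :
    (coloredInclusion i S).Full ∧ (coloredInclusion i S).Faithful ∧
      IsDenseF (coloredInclusion i S) := by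
  obtain ⟨hfull, hfaith⟩ := hd
  have Jfull : (coloredInclusion i S).Full := by
    constructor
    rintro ⟨⟨s⟩, θ⟩ ⟨⟨t⟩, θ'⟩ f
    have hw : f.left ≫ (terminal.from (i.obj θ') ≫ Sigma.ι (fun _ : S => ⊤_ A) t)
        = terminal.from (i.obj θ) ≫ Sigma.ι (fun _ : S => ⊤_ A) s := Over.w f
    have hst : s = t := by
      have h1 : terminal.from (i.obj θ) ≫ Sigma.ι (fun _ : S => ⊤_ A) s
          = terminal.from (i.obj θ) ≫ Sigma.ι (fun _ : S => ⊤_ A) t := by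
        rw [← hw]
        exact (Category.assoc _ _ _).symm.trans (congrArg (· ≫ _) (terminal.hom_ext _ _))
      obtain ⟨u, -, hu⟩ := hsep θ (terminal.from (i.obj θ) ≫ Sigma.ι (fun _ : S => ⊤_ A) s)
      rw [hu s rfl, hu t h1]
    subst hst
    refine ⟨⟨⟨⟨rfl⟩⟩, i.preimage f.left⟩, ?_⟩
    ext
    simp [coloredInclusion]
  have Jfaith : (coloredInclusion i S).Faithful := by
    constructor
    rintro ⟨⟨s⟩, θ⟩ ⟨⟨t⟩, θ'⟩ f g h
    have h2 : f.2 = g.2 := by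
      apply i.map_injective
      have := congrArg CommaMorphism.left h
      simpa [coloredInclusion] using this
    exact Prod.ext (Subsingleton.elim _ _) h2
  refine ⟨Jfull, Jfaith, ?_, ?_⟩
  · -- the nerve of the colored inclusion is full
    constructor
    intro X Y φ
    obtain ⟨m₀, hm₀⟩ := hfull.map_surjective (auxBar i S hsep φ)
    have hcomp : ∀ (θ : Θ₀) (g : i.obj θ ⟶ X.left),
        g ≫ m₀ = auxBarFun i S hsep φ g := fun θ g =>
      types_congr_hom (congrArg (fun (α : (nerveOf i).obj X.left ⟶ (nerveOf i).obj Y.left) =>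
        α.app (Opposite.op θ)) hm₀) g
    have hw : m₀ ≫ Y.hom = X.hom := by
      apply hfaith.map_injective
      ext θ (g : i.obj θ.unop ⟶ X.left)
      show g ≫ m₀ ≫ Y.hom = g ≫ X.hom
      rw [← Category.assoc, hcomp θ.unop g, auxBarFun_w]
    refine ⟨Over.homMk m₀ hw, ?_⟩
    ext ⟨⟨s⟩, θ⟩ (u : (coloredInclusion i S).obj (⟨s⟩, θ) ⟶ X)
    show u ≫ Over.homMk m₀ hw = φ.app _ u
    have hu : u.left ≫ X.hom
        = terminal.from (i.obj θ) ≫ Sigma.ι (fun _ : S => ⊤_ A) s := Over.w u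
    have huu : auxToOver i S u.left s hu = u := by ext; rfl
    ext
    show u.left ≫ m₀ = _
    exact (hcomp θ u.left).trans ((auxBarFun_eq i S hsep φ u.left s hu).trans
      (congrArg (fun v => (φ.app (Opposite.op (⟨s⟩, θ)) v).left) huu))
  · -- the nerve of the colored inclusion is faithful
    constructor
    intro X Y m m' h
    ext
    apply hfaith.map_injective
    ext θ (g : i.obj θ.unop ⟶ X.left)
    show g ≫ m.left = g ≫ m'.left
    have hv := types_congr_hom (congrArg (fun (α : (nerveOf (coloredInclusion i S)).obj X ⟶
        (nerveOf (coloredInclusion i S)).obj Y) =>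
      α.app (Opposite.op (⟨auxColor i S hsep g⟩, θ.unop))) h)
      (auxToOver i S g _ (auxColor_spec i S hsep g))
    have := congrArg CommaMorphism.left hv
    exact this
end
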